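/- For N even with N ≥ 2, M ≥ 2, and 2^{M-1} ≥ N/2 (so a valid schedule exists), the sequence produced by the greedy backward construction is a valid elimination schedule: it satisfies N*_0 = N, N*_{M-1} = 2, every term even, strictly decreasing by at least 2, and N*_t ≤ 2·N*_{t+1} for all t. -/

import Mathlib

/-- The greedy backward construction: `greedy N M k` is `N*_{M-1-k}`, starting
from `N*_{M-1} = 2` and, for `m = M-1` down to `2`, setting
`δ = 2⌊(N - N*_m)/(2m)⌋` and `N*_{m-1} = 2 N*_m` if `δ ≥ N*_m`, else
`N*_{m-1} = N*_m + δ`. -/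
def greedy (N M : ℕ) : ℕ → ℕ
  | 0 => 2
  | k + 1 =>
      let g := greedy N M k
      let m := M - 1 - k
      let δ := 2 * ((N - g) / (2 * m))
      if g ≤ δ then 2 * g else g + δ

/-- The resulting schedule: `N*_0 = N` and `N*_t = greedy N M (M-1-t)` for `t ≥ 1`. -/
def Nstar (N M t : ℕ) : ℕ := if t = 0 then N else greedy N M (M - 1 - t)

lemma greedy_succ (N M k : ℕ) :
    greedy N M (k + 1) =
      if greedy N M k ≤ 2 * ((N - greedy N M k) / (2 * (M - 1 - k))) then
        2 * greedy N M k
      else greedy N M k + 2 * ((N - greedy N M k) / (2 * (M - 1 - k))) := rfl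

lemma greedy_ge_two (N M k : ℕ) : 2 ≤ greedy N M k := by
  induction k with
  | zero => exact le_rfl
  | succ k ih => rw [greedy_succ]; split_ifs <;> omega

lemma greedy_even (N M k : ℕ) : greedy N M k % 2 = 0 := by
  induction k with
  | zero => simp [greedy]
  | succ k ih => rw [greedy_succ]; split_ifs <;> omega

lemma aux_add_le_mul {m q : ℕ} (hm : 1 ≤ m) (hq : 1 ≤ q) : m + q ≤ m * q + 1 := by
  obtain ⟨a, rfl⟩ : ∃ a, m = a + 1 := ⟨m - 1, by omega⟩
  obtain ⟨b, rfl⟩ : ∃ b, q = b + 1 := ⟨q - 1, by omega⟩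
  have h : (a + 1) * (b + 1) = a * b + a + b + 1 := by ring
  omega

lemma greedy_invI (N M : ℕ) (hM : 2 ≤ M) (h2M : 2 * M ≤ N) :
    ∀ k, k ≤ M - 2 → greedy N M k + 2 * (M - 1 - k) ≤ N := by
  intro k
  induction k with
  | zero =>
    intro _
    have h : greedy N M 0 = 2 := rfl
    omega
  | succ k ih =>
    intro hk
    have ihk := ih (by omega)
    have hge := greedy_ge_two N M k
    rw [greedy_succ]
    obtain ⟨m, hm⟩ : ∃ m', M - 1 - k = m' + 2 := ⟨M - 3 - k, by omega⟩
    rw [hm]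
    rw [hm] at ihk
    have hidx : M - 1 - (k + 1) = m + 1 := by omega
    rw [hidx]
    set g := greedy N M k with hgdef
    have hq1 : 1 ≤ (N - g) / (2 * (m + 2)) :=
      (Nat.one_le_div_iff (by omega)).mpr (by omega)
    have haux : (m + 2) + (N - g) / (2 * (m + 2)) ≤ (m + 2) * ((N - g) / (2 * (m + 2))) + 1 :=
      aux_add_le_mul (by omega) hq1
    have hdm := Nat.div_add_mod (N - g) (2 * (m + 2))
    have hrlt : (N - g) % (2 * (m + 2)) < 2 * (m + 2) := Nat.mod_lt _ (by omega)
    have hmul : 2 * (m + 2) * ((N - g) / (2 * (m + 2)))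
        = 2 * ((m + 2) * ((N - g) / (2 * (m + 2)))) := by ring
    split_ifs with hbr <;> omega

lemma greedy_invJ (N M : ℕ) (hM : 2 ≤ M) (hNe : N % 2 = 0) (hNle : N ≤ 2 ^ M) :
    ∀ k, k ≤ M - 2 → N - greedy N M k ≤ (2 ^ (M - 1 - k) - 1) * greedy N M k := by
  intro k
  induction k with
  | zero =>
    intro _
    have h : greedy N M 0 = 2 := rfl
    rw [h, Nat.sub_zero]
    have h1 : (2:ℕ) ^ M = 2 * 2 ^ (M - 1) := by
      conv_lhs => rw [show M = (M - 1) + 1 by omega, pow_succ, mul_comm]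
    have h2 : 1 ≤ (2:ℕ) ^ (M - 1) := Nat.one_le_two_pow
    have h3 : ((2:ℕ) ^ (M - 1) - 1) * 2 = 2 * 2 ^ (M - 1) - 2 := by omega
    omega
  | succ k ih =>
    intro hk
    have ihk := ih (by omega)
    have hge := greedy_ge_two N M k
    have hev := greedy_even N M k
    rw [greedy_succ]
    obtain ⟨m, hm⟩ : ∃ m', M - 1 - k = m' + 2 := ⟨M - 3 - k, by omega⟩
    rw [hm]
    rw [hm] at ihk
    have hidx : M - 1 - (k + 1) = m + 1 := by omega
    rw [hidx]
    set g := greedy N M k with hgdef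
    set q := (N - g) / (2 * (m + 2)) with hqdef
    have hdm := Nat.div_add_mod (N - g) (2 * (m + 2))
    have hrlt : (N - g) % (2 * (m + 2)) < 2 * (m + 2) := Nat.mod_lt _ (by omega)
    have hrev : (N - g) % (2 * (m + 2)) % 2 = (N - g) % 2 :=
      Nat.mod_mod_of_dvd _ ⟨m + 2, rfl⟩
    have hmul : 2 * (m + 2) * q = 2 * ((m + 2) * q) := by ring
    rw [← hqdef, hmul] at hdm
    -- hdm : 2 * ((m+2)*q) + (N-g) % (2*(m+2)) = N - g
    split_ifs with hbr
    · -- doubling branch : N - 2*g ≤ (2^(m+1) - 1) * (2*g)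
      have hPg : ((2:ℕ) ^ (m + 1) - 1) * (2 * g) = (2 ^ (m + 2) - 1) * g - g := by
        rcases Nat.exists_eq_add_of_le (Nat.one_le_two_pow : 1 ≤ (2:ℕ) ^ (m + 1)) with ⟨P, hP⟩
        have h2 : (2:ℕ) ^ (m + 2) = 2 * 2 ^ (m + 1) := by ring
        rw [h2, hP]
        have e1 : 1 + P - 1 = P := by omega
        have e2 : 2 * (1 + P) - 1 = 2 * P + 1 := by omega
        rw [e1, e2, add_mul, one_mul, Nat.add_sub_cancel]
        ring
      calc N - 2 * g = (N - g) - g := by omega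
        _ ≤ (2 ^ (m + 2) - 1) * g - g := Nat.sub_le_sub_right ihk g
        _ = (2 ^ (m + 1) - 1) * (2 * g) := hPg.symm
    · -- slack branch : N - (g + 2*q) ≤ (2^(m+1) - 1) * (g + 2*q)
      have hA : N - (g + 2 * q) ≤ (m + 1) * (2 * q + 2) := by
        have hexp : (m + 1) * (2 * q + 2) + (2 * q + 2) = 2 * ((m + 2) * q) + 2 * (m + 2) := by
          ring
        omega
      have hB : (m + 1) * (2 * q + 2) ≤ ((2:ℕ) ^ (m + 1) - 1) * (2 * q + 2) :=
        Nat.mul_le_mul_right _ (by have := Nat.lt_two_pow_self (n := m + 1); omega)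
      have hC : ((2:ℕ) ^ (m + 1) - 1) * (2 * q + 2) ≤ (2 ^ (m + 1) - 1) * (g + 2 * q) :=
        Nat.mul_le_mul_left _ (by omega)
      exact le_trans hA (le_trans hB hC)

lemma greedy_step_upper (N M k : ℕ) : greedy N M (k + 1) ≤ 2 * greedy N M k := by
  have hge := greedy_ge_two N M k
  rw [greedy_succ]; split_ifs with h <;> omega

lemma greedy_step_lower (N M k : ℕ) (hM : 2 ≤ M) (h2M : 2 * M ≤ N)
    (hk : k + 1 ≤ M - 2) : greedy N M k + 2 ≤ greedy N M (k + 1) := by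
  have hge := greedy_ge_two N M k
  have hI := greedy_invI N M hM h2M k (by omega)
  rw [greedy_succ]
  have hq1 : 1 ≤ (N - greedy N M k) / (2 * (M - 1 - k)) :=
    (Nat.one_le_div_iff (by omega)).mpr (by omega)
  split_ifs with h <;> omega

/-- For even `N ≥ 2`, `M ≥ 2`, with `N/2 ≤ 2^(M-1)` and
`M ≤ N/2`, the greedy backward construction yields a valid elimination
schedule: it starts at `N`, ends at `2`, all terms are even, it decreases by
at least `2` each round, and never more than halves. -/
theorem greedy_valid (N M : ℕ) (hN : Even N) (hN2 : 2 ≤ N) (hM : 2 ≤ M)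
    (hfeas : N / 2 ≤ 2 ^ (M - 1)) (hMN : M ≤ N / 2) :
    Nstar N M 0 = N ∧ Nstar N M (M - 1) = 2 ∧
    (∀ t ≤ M - 1, Even (Nstar N M t)) ∧
    (∀ t < M - 1, Nstar N M (t + 1) + 2 ≤ Nstar N M t) ∧
    (∀ t < M - 1, Nstar N M t ≤ 2 * Nstar N M (t + 1)) := by
  have hNe : N % 2 = 0 := Nat.even_iff.mp hN
  have h2M : 2 * M ≤ N := by omega
  have hNle : N ≤ 2 ^ M := by
    have h1 : (2:ℕ) ^ M = 2 * 2 ^ (M - 1) := by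
      conv_lhs => rw [show M = (M - 1) + 1 by omega, pow_succ, mul_comm]
    omega
  refine ⟨by simp [Nstar], ?_, ?_, ?_, ?_⟩
  · have h1 : M - 1 ≠ 0 := by omega
    simp only [Nstar, if_neg h1, Nat.sub_self]
    rfl
  · intro t ht
    rcases Nat.eq_zero_or_pos t with rfl | htp
    · simpa [Nstar] using hN
    · have h1 : t ≠ 0 := by omega
      simp only [Nstar, if_neg h1]
      exact Nat.even_iff.mpr (greedy_even N M _)
  · intro t ht
    rcases Nat.eq_zero_or_pos t with rfl | htp
    · have h3 : M - 1 - (0 + 1) = M - 2 := by omega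
      have e0 : Nstar N M 0 = N := by simp [Nstar]
      have e1 : Nstar N M (0 + 1) = greedy N M (M - 2) := by simp [Nstar, h3]
      rw [e0, e1]
      have hI := greedy_invI N M hM h2M (M - 2) le_rfl
      have h2 : M - 1 - (M - 2) = 1 := by omega
      rw [h2] at hI
      omega
    · have h1 : t ≠ 0 := by omega
      have h2 : t + 1 ≠ 0 := by omega
      simp only [Nstar, if_neg h1, if_neg h2]
      have hk : M - 1 - t = (M - 1 - (t + 1)) + 1 := by omega
      rw [hk]
      exact greedy_step_lower N M _ hM h2M (by omega)
  · intro t ht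
    rcases Nat.eq_zero_or_pos t with rfl | htp
    · have h3 : M - 1 - (0 + 1) = M - 2 := by omega
      have e0 : Nstar N M 0 = N := by simp [Nstar]
      have e1 : Nstar N M (0 + 1) = greedy N M (M - 2) := by simp [Nstar, h3]
      rw [e0, e1]
      have hJ := greedy_invJ N M hM hNe hNle (M - 2) le_rfl
      have h2 : M - 1 - (M - 2) = 1 := by omega
      rw [h2] at hJ
      norm_num at hJ
      omega
    · have h1 : t ≠ 0 := by omega
      have h2 : t + 1 ≠ 0 := by omega
      simp only [Nstar, if_neg h1, if_neg h2]
      have hk : M - 1 - t = (M - 1 - (t + 1)) + 1 := by omega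
      rw [hk]
      exact greedy_step_upper N M _
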